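/- For the finite-difference operators N₁ = −[x₂(ξ−x₁)/(ξ(x₁−x₂))]T_{q,x₁} + [x₁(ξ−x₂)/(ξ(x₁−x₂))]T_{q,x₂} and N₂ = −[(ξ−x₁)/(x₁−x₂)]T_{q,x₁} + [(ξ−x₂)/(x₁−x₂)]T_{q,x₂}, the Laurent polynomials p_ν = (x₁x₂)^{ν₁}(ξ^{−1}x₁, ξ^{−1}x₂; q)_{ν₂₁} (ν₁ ≤ ν₂ integers, ν₂₁ = ν₂−ν₁) satisfy N₁ p_ν = q^{ν₁} p_ν and N₂ p_ν = q^{ν₂} p_ν. -/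

import Mathlib

open Finset

/-- The q-Pochhammer symbol `(a;q)_n`. -/
noncomputable def qPoch (a q : ℂ) (n : ℕ) : ℂ := ∏ j ∈ Finset.range n, (1 - a * q ^ j)

lemma qPoch_shift (a q : ℂ) (m : ℕ) :
    (1 - a) * qPoch (q * a) q m = (1 - a * q ^ m) * qPoch a q m := by
  have h1 : qPoch a q (m + 1) = qPoch a q m * (1 - a * q ^ m) := Finset.prod_range_succ _ _
  have h2 : qPoch a q (m + 1) = (1 - a) * qPoch (q * a) q m := by
    unfold qPoch
    rw [Finset.prod_range_succ']
    simp only [pow_zero, mul_one]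
    rw [mul_comm]
    congr 1
    exact Finset.prod_congr rfl fun j _ => by ring
  rw [← h2, h1]; ring

/-- The basis p_ν(x₁,x₂) = (x₁x₂)^{ν₁}(ξ⁻¹x₁, ξ⁻¹x₂; q)_{ν₂₁}. -/
noncomputable def pbasis (q ξ : ℂ) (n1 n2 : ℤ) (x1 x2 : ℂ) : ℂ :=
  (x1 * x2) ^ n1 * qPoch (ξ⁻¹ * x1) q (n2 - n1).toNat *
    qPoch (ξ⁻¹ * x2) q (n2 - n1).toNat

/-- p_ν are eigenfunctions of the operators N₁ and N₂:
N₁ p_ν = q^{ν₁} p_ν, N₂ p_ν = q^{ν₂} p_ν, where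
N₁ = −[x₂(ξ−x₁)/(ξ(x₁−x₂))]T_{q,x₁} + [x₁(ξ−x₂)/(ξ(x₁−x₂))]T_{q,x₂} and
N₂ = −[(ξ−x₁)/(x₁−x₂)]T_{q,x₁} + [(ξ−x₂)/(x₁−x₂)]T_{q,x₂}. -/
theorem pbasis_eigenfunctions (q ξ : ℂ) (hq : q ≠ 0) (hξ : ξ ≠ 0)
    (n1 n2 : ℤ) (h : n1 ≤ n2) (x1 x2 : ℂ) (h1 : x1 ≠ 0) (h2 : x2 ≠ 0)
    (hne : x1 ≠ x2) :
    (-(x2 * (ξ - x1) / (ξ * (x1 - x2))) * pbasis q ξ n1 n2 (q * x1) x2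
        + x1 * (ξ - x2) / (ξ * (x1 - x2)) * pbasis q ξ n1 n2 x1 (q * x2)
      = q ^ n1 * pbasis q ξ n1 n2 x1 x2)
    ∧ (-((ξ - x1) / (x1 - x2)) * pbasis q ξ n1 n2 (q * x1) x2
        + (ξ - x2) / (x1 - x2) * pbasis q ξ n1 n2 x1 (q * x2)
      = q ^ n2 * pbasis q ξ n1 n2 x1 x2) := by
  set m : ℕ := (n2 - n1).toNat with hm
  set P1 := qPoch (ξ⁻¹ * x1) q m with hP1
  set P2 := qPoch (ξ⁻¹ * x2) q m with hP2
  set Q1 := qPoch (ξ⁻¹ * (q * x1)) q m with hQ1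
  set Q2 := qPoch (ξ⁻¹ * (q * x2)) q m with hQ2
  have hsub : x1 - x2 ≠ 0 := sub_ne_zero.mpr hne
  have key1 : (ξ - x1) * Q1 = (ξ - q ^ m * x1) * P1 := by
    have := qPoch_shift (ξ⁻¹ * x1) q m
    have e : ξ⁻¹ * (q * x1) = q * (ξ⁻¹ * x1) := by ring
    rw [hQ1, e, hP1]
    apply mul_left_cancel₀ (inv_ne_zero hξ)
    calc ξ⁻¹ * ((ξ - x1) * qPoch (q * (ξ⁻¹ * x1)) q m)
        = (1 - ξ⁻¹ * x1) * qPoch (q * (ξ⁻¹ * x1)) q m := by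
          linear_combination qPoch (q * (ξ⁻¹ * x1)) q m * inv_mul_cancel₀ hξ
      _ = (1 - ξ⁻¹ * x1 * q ^ m) * qPoch (ξ⁻¹ * x1) q m := qPoch_shift _ _ _
      _ = ξ⁻¹ * ((ξ - q ^ m * x1) * qPoch (ξ⁻¹ * x1) q m) := by
          linear_combination (-(qPoch (ξ⁻¹ * x1) q m)) * inv_mul_cancel₀ hξ
  have key2 : (ξ - x2) * Q2 = (ξ - q ^ m * x2) * P2 := by
    have e : ξ⁻¹ * (q * x2) = q * (ξ⁻¹ * x2) := by ring
    rw [hQ2, e, hP2]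
    apply mul_left_cancel₀ (inv_ne_zero hξ)
    calc ξ⁻¹ * ((ξ - x2) * qPoch (q * (ξ⁻¹ * x2)) q m)
        = (1 - ξ⁻¹ * x2) * qPoch (q * (ξ⁻¹ * x2)) q m := by
          linear_combination qPoch (q * (ξ⁻¹ * x2)) q m * inv_mul_cancel₀ hξ
      _ = (1 - ξ⁻¹ * x2 * q ^ m) * qPoch (ξ⁻¹ * x2) q m := qPoch_shift _ _ _
      _ = ξ⁻¹ * ((ξ - q ^ m * x2) * qPoch (ξ⁻¹ * x2) q m) := by
          linear_combination (-(qPoch (ξ⁻¹ * x2) q m)) * inv_mul_cancel₀ hξ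
  have hz1 : (q * x1 * x2) ^ n1 = q ^ n1 * (x1 * x2) ^ n1 := by
    rw [mul_assoc, mul_zpow]
  have hz2 : (x1 * (q * x2)) ^ n1 = q ^ n1 * (x1 * x2) ^ n1 := by
    rw [show x1 * (q * x2) = q * (x1 * x2) by ring, mul_zpow]
  have hq2 : (q : ℂ) ^ n2 = q ^ n1 * q ^ m := by
    rw [← zpow_natCast q m, ← zpow_add₀ hq]
    congr 1
    rw [hm, Int.toNat_of_nonneg (sub_nonneg.mpr h)]
    ring
  simp only [pbasis, ← hm, ← hP1, ← hP2, ← hQ1, ← hQ2, hz1, hz2, hq2]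
  constructor
  · rw [neg_mul, div_mul_eq_mul_div, div_mul_eq_mul_div, neg_add_eq_sub,
      div_sub_div_same, div_eq_iff (mul_ne_zero hξ hsub)]
    linear_combination (-(x2 * P2) * key1 + x1 * P1 * key2) *
      (q ^ n1 * (x1 * x2) ^ n1)
  · rw [neg_mul, div_mul_eq_mul_div, div_mul_eq_mul_div, neg_add_eq_sub,
      div_sub_div_same, div_eq_iff hsub]
    linear_combination ((-P2) * key1 + P1 * key2) * (q ^ n1 * (x1 * x2) ^ n1)
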